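/- Let μ be a probability measure on [0,1] with cumulative distribution function F(u) := μ[0,u], let λ be the uniform (Lebesgue) probability measure on [0,1], and let N ≥ 1. Then the probability that the maximum of N i.i.d. samples from μ strictly exceeds the maximum of N independent i.i.d. uniform samples satisfies μ^{⊗N} ⊗ λ^{⊗N}{((x₁,…,x_N),(u₁,…,u_N)) : max_i x_i > max_j u_j} = 1 − N·∫₀¹ F(u)^N · u^{N−1} du. -/

import Mathlib

open MeasureTheory Set

namespace Stmt18Aux

variable {N : ℕ}


lemma measurable_sup (hN : 1 ≤ N) : Measurable (fun u : Fin N → ℝ => ⨆ i, u i) := by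
  haveI : Nonempty (Fin N) := ⟨⟨0, hN⟩⟩
  have h : (fun u : Fin N → ℝ => ⨆ i, u i)
      = Finset.univ.sup' Finset.univ_nonempty (fun i (u : Fin N → ℝ) => u i) := by
    funext u; rw [Finset.sup'_apply, Finset.sup'_univ_eq_ciSup]
  rw [h]; exact Finset.measurable_sup' _ fun i _ => measurable_pi_apply i

lemma sup_le_iff (hN : 1 ≤ N) (u : Fin N → ℝ) (c : ℝ) :
    (⨆ i, u i) ≤ c ↔ ∀ i, u i ≤ c := by
  haveI : Nonempty (Fin N) := ⟨⟨0, hN⟩⟩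
  rw [← Finset.sup'_univ_eq_ciSup]; simp [Finset.sup'_le_iff]

lemma sup_lt_iff (hN : 1 ≤ N) (u : Fin N → ℝ) (c : ℝ) :
    (⨆ i, u i) < c ↔ ∀ i, u i < c := by
  haveI : Nonempty (Fin N) := ⟨⟨0, hN⟩⟩
  rw [← Finset.sup'_univ_eq_ciSup]; simp [Finset.sup'_lt_iff]

lemma le_sup (hN : 1 ≤ N) (u : Fin N → ℝ) (i : Fin N) : u i ≤ ⨆ i, u i := by
  haveI : Nonempty (Fin N) := ⟨⟨0, hN⟩⟩
  rw [← Finset.sup'_univ_eq_ciSup]; exact Finset.le_sup' _ (Finset.mem_univ i)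

end Stmt18Aux

open Stmt18Aux

theorem stmt_18 (μ : Measure ℝ) [IsProbabilityMeasure μ]
    (hsupp : μ (Set.Icc (0 : ℝ) 1) = 1)
    (F : ℝ → ℝ) (hF : ∀ u, F u = (μ (Set.Icc 0 u)).toReal)
    (N : ℕ) (hN : 1 ≤ N) :
    (((Measure.pi fun _ : Fin N => μ).prod
        (Measure.pi fun _ : Fin N => volume.restrict (Set.Icc (0 : ℝ) 1)))
        {p : (Fin N → ℝ) × (Fin N → ℝ) | (⨆ j, p.2 j) < ⨆ i, p.1 i}).toReal
      = 1 - N * ∫ u in (0 : ℝ)..1, F u ^ N * u ^ (N - 1) := by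
  haveI : Nonempty (Fin N) := ⟨⟨0, hN⟩⟩
  set lam := volume.restrict (Set.Icc (0:ℝ) 1) with hlamdef
  haveI hlamprob : IsProbabilityMeasure lam := by
    constructor
    rw [hlamdef, Measure.restrict_apply_univ, Real.volume_Icc]; norm_num
  set ν := Measure.pi fun _ : Fin N => μ with hνdef
  set ρ := Measure.pi fun _ : Fin N => lam with hρdef
  set M := fun u : Fin N → ℝ => ⨆ i, u i with hMdef
  have hMm : Measurable M := measurable_sup hN
  -- F facts
  have hFnonneg : ∀ c, 0 ≤ F c := fun c => by rw [hF]; exact ENNReal.toReal_nonneg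
  have hFle1 : ∀ c, F c ≤ 1 := fun c => by
    rw [hF]
    have : μ (Set.Icc 0 c) ≤ 1 := prob_le_one
    simpa using ENNReal.toReal_mono ENNReal.one_ne_top this
  have hFmono : Monotone F := by
    intro a b hab
    rw [hF, hF]
    exact ENNReal.toReal_mono (measure_ne_top μ _)
      (measure_mono (Set.Icc_subset_Icc le_rfl hab))
  have hFmeas : Measurable F := hFmono.measurable
  -- μ (Iic c) = ofReal (F c) for c ∈ [0,1]
  have hIic : ∀ c : ℝ, c ∈ Set.Icc (0:ℝ) 1 → μ (Set.Iic c) = ENNReal.ofReal (F c) := by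
    intro c hc
    have h1 : μ (Set.Iic c) = μ (Set.Icc 0 c) := by
      apply le_antisymm
      · calc μ (Set.Iic c) ≤ μ (Set.Iic c ∩ Set.Icc 0 1) + μ (Set.Iic c \ Set.Icc 0 1) :=
              measure_le_inter_add_diff μ _ _
          _ ≤ μ (Set.Icc 0 c) + 0 := by
              refine add_le_add (measure_mono ?_) ?_
              · intro t ⟨ht1, ht2, _⟩; exact ⟨ht2, ht1⟩
              · have : μ (Set.Icc (0:ℝ) 1)ᶜ = 0 := by
                  rw [measure_compl measurableSet_Icc (measure_ne_top μ _), hsupp,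
                    measure_univ, tsub_self]
                calc μ (Set.Iic c \ Set.Icc 0 1) ≤ μ (Set.Icc (0:ℝ) 1)ᶜ :=
                    measure_mono (Set.diff_subset_compl _ _)
                  _ = 0 := this
          _ = μ (Set.Icc 0 c) := add_zero _
      · exact measure_mono (fun t ht => ht.2)
    rw [h1, hF, ENNReal.ofReal_toReal (measure_ne_top μ _)]
  -- inner measure: ν {x | c < M x} = 1 - ofReal (F c) ^ N for c ∈ [0,1]
  have hinner : ∀ c : ℝ, c ∈ Set.Icc (0:ℝ) 1 →
      ν {x : Fin N → ℝ | c < M x} = 1 - ENNReal.ofReal (F c) ^ N := by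
    intro c hc
    have hset : {x : Fin N → ℝ | M x ≤ c} = Set.pi Set.univ (fun _ => Set.Iic c) := by
      ext x; simp [hMdef, sup_le_iff hN, Pi.le_def]
    have hle : ν {x : Fin N → ℝ | M x ≤ c} = ENNReal.ofReal (F c) ^ N := by
      rw [hset, hνdef, Measure.pi_pi]
      simp [hIic c hc]
    have hcompl : {x : Fin N → ℝ | c < M x} = {x : Fin N → ℝ | M x ≤ c}ᶜ := by
      ext x; simp
    rw [hcompl, measure_compl ?_ ?_, hle, measure_univ]
    · rw [hset]; exact MeasurableSet.univ_pi fun _ => measurableSet_Iic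
    · exact measure_ne_top ν _
  -- the set is measurable
  have hS : MeasurableSet {p : (Fin N → ℝ) × (Fin N → ℝ) | (⨆ j, p.2 j) < ⨆ i, p.1 i} :=
    measurableSet_lt (hMm.comp measurable_snd) (hMm.comp measurable_fst)
  -- a.e. u has coordinates in [0,1]
  have hae : ∀ᵐ u ∂ρ, M u ∈ Set.Icc (0:ℝ) 1 := by
    have h0 : ρ (Set.pi Set.univ fun _ : Fin N => Set.Icc (0:ℝ) 1)ᶜ = 0 := by
      rw [measure_compl (MeasurableSet.univ_pi fun _ => measurableSet_Icc) (measure_ne_top ρ _),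
        hρdef, Measure.pi_pi, measure_univ]
      simp [hlamdef, Measure.restrict_apply_self, Real.volume_Icc]
    refine (ae_iff.2 ?_)
    refine measure_mono_null ?_ h0
    intro u hu
    simp only [Set.mem_compl_iff, Set.mem_pi, Set.mem_univ, forall_true_left] at *
    intro hall
    apply hu
    constructor
    · exact le_trans (hall ⟨0, hN⟩).1 (le_sup hN u ⟨0, hN⟩)
    · exact (sup_le_iff hN u 1).2 fun i => (hall i).2
  -- main computation via prod_apply_symm
  have hprod : ((ν.prod ρ)
      {p : (Fin N → ℝ) × (Fin N → ℝ) | (⨆ j, p.2 j) < ⨆ i, p.1 i})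
      = ∫⁻ u, (1 - ENNReal.ofReal (F (M u)) ^ N) ∂ρ := by
    rw [Measure.prod_apply_symm hS]
    refine lintegral_congr_ae ?_
    filter_upwards [hae] with u hu
    have : (fun x => (x, u)) ⁻¹' {p : (Fin N → ℝ) × (Fin N → ℝ) | (⨆ j, p.2 j) < ⨆ i, p.1 i}
        = {x : Fin N → ℝ | M u < M x} := rfl
    rw [this, hinner _ hu]
  -- split the integral
  have hgm : Measurable fun u : Fin N → ℝ => ENNReal.ofReal (F (M u)) ^ N :=
    (ENNReal.measurable_ofReal.comp (hFmeas.comp hMm)).pow_const N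
  have hgle : ∀ u : Fin N → ℝ, ENNReal.ofReal (F (M u)) ^ N ≤ 1 :=
    fun u => pow_le_one' (ENNReal.ofReal_le_one.2 (hFle1 _)) N
  have hIle : (∫⁻ u, ENNReal.ofReal (F (M u)) ^ N ∂ρ) ≤ 1 := by
    calc (∫⁻ u, ENNReal.ofReal (F (M u)) ^ N ∂ρ) ≤ ∫⁻ _, 1 ∂ρ :=
        lintegral_mono hgle
      _ = 1 := by simp
  have hsplit : (∫⁻ u, (1 - ENNReal.ofReal (F (M u)) ^ N) ∂ρ)
      = 1 - ∫⁻ u, ENNReal.ofReal (F (M u)) ^ N ∂ρ := by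
    have := lintegral_sub hgm (lt_of_le_of_lt hIle ENNReal.one_lt_top).ne
      (Filter.Eventually.of_forall hgle)
    simpa using this
  -- the distribution of M under ρ
  set κ := (volume.restrict (Set.Ioc (0:ℝ) 1)).withDensity
      (fun t => ENNReal.ofReal ((N:ℝ) * t ^ (N-1))) with hκdef
  have hlamIic : ∀ a : ℝ, lam (Set.Iic a) = ENNReal.ofReal (min a 1) := by
    intro a
    rw [hlamdef, Measure.restrict_apply measurableSet_Iic]
    rcases le_or_gt a 1 with h | h
    · have : Set.Iic a ∩ Set.Icc 0 1 = Set.Icc 0 a := by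
        ext t
        constructor
        · rintro ⟨ht1, ht2, _⟩; exact ⟨ht2, ht1⟩
        · rintro ⟨ht1, ht2⟩; exact ⟨ht2, ht1, le_trans ht2 h⟩
      rw [this, Real.volume_Icc, min_eq_left h, sub_zero]
    · have : Set.Iic a ∩ Set.Icc 0 1 = Set.Icc 0 1 := by
        ext t
        constructor
        · rintro ⟨_, ht2, ht3⟩; exact ⟨ht2, ht3⟩
        · rintro ⟨ht1, ht2⟩; exact ⟨le_trans ht2 h.le, ht1, ht2⟩
      rw [this, Real.volume_Icc, min_eq_right h.le]; norm_num
  have hmapIic : ∀ a : ℝ, (ρ.map M) (Set.Iic a) = ENNReal.ofReal (min a 1) ^ N := by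
    intro a
    rw [Measure.map_apply hMm measurableSet_Iic]
    have hpre : M ⁻¹' Set.Iic a = Set.pi Set.univ fun _ => Set.Iic a := by
      ext u; simp [hMdef, sup_le_iff hN, Pi.le_def]
    rw [hpre, hρdef, Measure.pi_pi]
    simp [hlamIic a]
  have hκIic : ∀ a : ℝ, κ (Set.Iic a) = ENNReal.ofReal (min a 1) ^ N := by
    intro a
    rw [hκdef, withDensity_apply _ measurableSet_Iic,
      Measure.restrict_restrict measurableSet_Iic]
    rcases le_or_gt (min a 1) 0 with h | h
    · have hset : Set.Iic a ∩ Set.Ioc 0 1 = ∅ := by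
        ext t
        simp only [Set.mem_inter_iff, Set.mem_Iic, Set.mem_Ioc, Set.mem_empty_iff_false,
          iff_false, not_and, and_imp]
        intro ht1 ht2 _
        have : a ≤ 0 := by
          rcases min_cases a 1 with ⟨he, _⟩ | ⟨he, hle⟩
          · rw [← he]; exact h
          · rw [he] at h; linarith
        linarith
      rw [hset]
      have : ENNReal.ofReal (min a 1) = 0 := ENNReal.ofReal_eq_zero.2 h
      simp [this, zero_pow (by omega : N ≠ 0)]
    · have hset : Set.Iic a ∩ Set.Ioc 0 1 = Set.Ioc 0 (min a 1) := by
        ext t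
        simp only [Set.mem_inter_iff, Set.mem_Iic, Set.mem_Ioc]
        constructor
        · rintro ⟨ht1, ht2, ht3⟩; exact ⟨ht2, le_min ht1 ht3⟩
        · rintro ⟨ht1, ht2⟩
          exact ⟨ht2.trans (min_le_left _ _), ht1, ht2.trans (min_le_right _ _)⟩
      rw [hset]
      have hc0 : (0:ℝ) ≤ min a 1 := h.le
      have hint : IntegrableOn (fun t : ℝ => (N:ℝ) * t ^ (N-1)) (Set.Ioc 0 (min a 1)) volume :=
        (continuous_const.mul (continuous_pow _)).integrableOn_Ioc
      rw [← ENNReal.ofReal_pow hc0, ← ofReal_integral_eq_lintegral_ofReal hint ?_]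
      · congr 1
        rw [← intervalIntegral.integral_of_le hc0, intervalIntegral.integral_const_mul,
          integral_pow]
        have hNN : N - 1 + 1 = N := Nat.sub_add_cancel hN
        rw [hNN]
        have hN0 : (N:ℝ) ≠ 0 := Nat.cast_ne_zero.2 (by omega)
        field_simp
        rw [zero_pow (by omega : N ≠ 0), Nat.cast_sub hN, Nat.cast_one]; ring
      · filter_upwards [ae_restrict_mem measurableSet_Ioc] with t ht
        have : (0:ℝ) < t := ht.1
        positivity
  have hmapeq : ρ.map M = κ := by
    haveI : IsProbabilityMeasure (ρ.map M) := Measure.isProbabilityMeasure_map hMm.aemeasurable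
    refine MeasureTheory.Measure.ext_of_Iic (ρ.map M) κ fun a => ?_
    rw [hmapIic, hκIic]
  -- rewrite the lintegral via the map
  have hI : (∫⁻ u, ENNReal.ofReal (F (M u)) ^ N ∂ρ)
      = ∫⁻ c in Set.Ioc (0:ℝ) 1,
          ENNReal.ofReal ((N:ℝ) * c ^ (N-1)) * ENNReal.ofReal (F c) ^ N ∂volume := by
    have hf1 : Measurable fun t : ℝ => ENNReal.ofReal ((N:ℝ) * t ^ (N-1)) :=
      ENNReal.measurable_ofReal.comp (measurable_const.mul (measurable_id.pow_const _))
    have hg1 : Measurable fun c : ℝ => ENNReal.ofReal (F c) ^ N :=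
      (ENNReal.measurable_ofReal.comp hFmeas).pow_const N
    rw [← lintegral_map (f := fun c => ENNReal.ofReal (F c) ^ N) hg1 hMm, hmapeq, hκdef,
      lintegral_withDensity_eq_lintegral_mul _ hf1 hg1]
    rfl
  -- convert to a real integral
  have hfmeas : Measurable fun c : ℝ => (N:ℝ) * (F c ^ N * c ^ (N-1)) :=
    measurable_const.mul ((hFmeas.pow_const N).mul (measurable_id'.pow_const _))
  have hint2 : IntegrableOn (fun c : ℝ => (N:ℝ) * (F c ^ N * c ^ (N-1)))
      (Set.Ioc (0:ℝ) 1) volume := by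
    refine Measure.integrableOn_of_bounded (M := (N:ℝ)) (by simp) hfmeas.aestronglyMeasurable ?_
    filter_upwards [ae_restrict_mem measurableSet_Ioc] with c hc
    have h0 : (0:ℝ) < c := hc.1
    have h1 : c ≤ 1 := hc.2
    have hFc : 0 ≤ F c := hFnonneg c
    have hFc1 : F c ≤ 1 := hFle1 c
    have hp1 : F c ^ N ≤ 1 := pow_le_one₀ hFc hFc1
    have hp2 : c ^ (N-1) ≤ 1 := pow_le_one₀ h0.le h1
    have hnn : 0 ≤ (N:ℝ) * (F c ^ N * c ^ (N-1)) := by positivity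
    rw [Real.norm_eq_abs, abs_of_nonneg hnn]
    calc (N:ℝ) * (F c ^ N * c ^ (N-1)) ≤ (N:ℝ) * (1 * 1) := by
          refine mul_le_mul_of_nonneg_left ?_ (Nat.cast_nonneg N)
          exact mul_le_mul hp1 hp2 (by positivity) (by norm_num)
      _ = (N:ℝ) := by ring
  have hae2 : 0 ≤ᵐ[volume.restrict (Set.Ioc (0:ℝ) 1)]
      fun c => (N:ℝ) * (F c ^ N * c ^ (N-1)) := by
    filter_upwards [ae_restrict_mem measurableSet_Ioc] with c hc
    have h0 : (0:ℝ) < c := hc.1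
    have hFc : 0 ≤ F c := hFnonneg c
    positivity
  have hI2 : (∫⁻ c in Set.Ioc (0:ℝ) 1,
        ENNReal.ofReal ((N:ℝ) * c ^ (N-1)) * ENNReal.ofReal (F c) ^ N ∂volume)
      = ENNReal.ofReal (∫ c in Set.Ioc (0:ℝ) 1, (N:ℝ) * (F c ^ N * c ^ (N-1))) := by
    rw [ofReal_integral_eq_lintegral_ofReal hint2 hae2]
    refine setLIntegral_congr_fun measurableSet_Ioc ?_
    intro c hc
    have h0 : (0:ℝ) < c := hc.1
    dsimp only
    rw [← ENNReal.ofReal_pow (hFnonneg c), ← ENNReal.ofReal_mul (by positivity)]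
    congr 1
    ring
  set r := ∫ c in Set.Ioc (0:ℝ) 1, (N:ℝ) * (F c ^ N * c ^ (N-1)) with hrdef
  have hrnonneg : 0 ≤ r := integral_nonneg_of_ae hae2
  have hofr_le : ENNReal.ofReal r ≤ 1 := by
    rw [← hI2, ← hI]; exact hIle
  rw [hprod, hsplit, hI, hI2, ENNReal.toReal_sub_of_le hofr_le ENNReal.one_ne_top,
    ENNReal.toReal_one, ENNReal.toReal_ofReal hrnonneg]
  congr 1
  rw [hrdef, ← intervalIntegral.integral_of_le (by norm_num : (0:ℝ) ≤ 1),
    intervalIntegral.integral_const_mul]
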